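/- arXiv:2003.00436 — 9 statements merged into one kernel-verified Lean document; each statement's English description precedes it below -/
import Mathlib

section
/- Let f : ℝ^d → ℝ^ℓ be a locally bounded measurable function and let N_f be the (Lebesgue-null) complement of its set of points of approximate continuity. Then for every x̄ ∈ ℝ^d, every δ > 0 and every Lebesgue-null set N ⊆ ℝ^d, one has f(B_δ(x̄) \ N_f) ⊆ closure( f(B_δ(x̄) \ (N_f ∪ N)) ), and consequently clco f(B_δ(x̄) \ N_f) = clco f(B_δ(x̄) \ (N_f ∪ N)). -/
open MeasureTheory Metric Filter Set Topology

noncomputable section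

/-- `ℝ^n` with the Euclidean structure. -/
abbrev Euc (n : ℕ) : Type := EuclideanSpace ℝ (Fin n)

/-- Closed convex hull of a set. -/
def clco {n : ℕ} (A : Set (Euc n)) : Set (Euc n) := closure (convexHull ℝ A)

/-- A function is locally bounded. -/
def LocBdd {d l : ℕ} (f : Euc d → Euc l) : Prop :=
  ∀ x : Euc d, ∃ δ > (0 : ℝ), ∃ C : ℝ, ∀ y ∈ Metric.ball x δ, ‖f y‖ ≤ C

/-- The Filippov regularization of `f`. -/
def FilippovReg {d l : ℕ} (f : Euc d → Euc l) (x : Euc d) : Set (Euc l) :=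
  ⋂ (N : Set (Euc d)) (_ : volume N = 0) (δ : ℝ) (_ : 0 < δ),
    clco (f '' (Metric.ball x δ \ N))

/-- The Krasovskii regularization of `f`. -/
def KrasovskiiReg {d l : ℕ} (f : Euc d → Euc l) (x : Euc d) : Set (Euc l) :=
  ⋂ (δ : ℝ) (_ : 0 < δ), clco (f '' Metric.ball x δ)

/-- A set-valued map is cusco: upper semicontinuous with nonempty compact convex values. -/
def IsCusco {d l : ℕ} (Φ : Euc d → Set (Euc l)) : Prop :=
  (∀ x : Euc d, ∀ U : Set (Euc l), IsOpen U → Φ x ⊆ U →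
      ∃ δ > (0 : ℝ), ∀ y ∈ Metric.ball x δ, Φ y ⊆ U) ∧
  ∀ x : Euc d, (Φ x).Nonempty ∧ IsCompact (Φ x) ∧ Convex ℝ (Φ x)

/-- The "minimal" map `m(Φ)` associated to a set-valued map `Φ`. -/
def mPhi {d l : ℕ} (Φ : Euc d → Set (Euc l)) (x : Euc d) : Set (Euc l) :=
  ⋂ (N : Set (Euc d)) (_ : volume N = 0) (δ : ℝ) (_ : 0 < δ),
    clco (⋃ a ∈ Metric.ball x δ \ N, Φ a)

/-- A point of approximate continuity of `f`. -/
def ApproxContAt {d l : ℕ} (f : Euc d → Euc l) (x : Euc d) : Prop :=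
  ∀ ε > (0 : ℝ),
    Tendsto (fun δ : ℝ =>
        volume {y ∈ Metric.ball x δ | ε ≤ ‖f y - f x‖} / volume (Metric.ball x δ))
      (𝓝[>] 0) (𝓝 0)

/-- A cusco map is Filippov representable if it is the Filippov regularization
of some locally bounded measurable function. -/
def FilippovRepresentable {d l : ℕ} (Φ : Euc d → Set (Euc l)) : Prop :=
  ∃ f : Euc d → Euc l, Measurable f ∧ LocBdd f ∧ ∀ x, Φ x = FilippovReg f x


/-- A locally bounded measurable function is locally integrable. -/
lemma LocBdd.locallyIntegrable {d l : ℕ} {f : Euc d → Euc l}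
    (hmeas : Measurable f) (hbdd : LocBdd f) : LocallyIntegrable f volume := by
  intro x
  obtain ⟨δ, hδ, C, hC⟩ := hbdd x
  refine ⟨Metric.ball x δ, Metric.ball_mem_nhds x hδ, ?_⟩
  exact Measure.integrableOn_of_bounded measure_ball_lt_top.ne hmeas.aestronglyMeasurable
    (ae_restrict_of_forall_mem measurableSet_ball hC)

lemma volume_closedBall_eq_ball {d : ℕ} (x : Euc d) {r : ℝ} (hr : 0 < r) :
    volume (Metric.closedBall x r) = volume (Metric.ball x r) := by
  refine le_antisymm ?_ (measure_mono Metric.ball_subset_closedBall)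
  rw [← ball_union_sphere]
  refine (measure_union_le _ _).trans ?_
  rw [Measure.addHaar_sphere_of_ne_zero volume x hr.ne', add_zero]

/-- Almost every point is a point of approximate continuity. -/
lemma ae_approxContAt {d l : ℕ} {f : Euc d → Euc l} (hmeas : Measurable f)
    (hf : LocallyIntegrable f volume) : ∀ᵐ x, ApproxContAt f x := by
  filter_upwards [IsUnifLocDoublingMeasure.ae_tendsto_average_norm_sub volume hf 1] with x hx
  intro ε hε
  have havg : Tendsto (fun r : ℝ => ⨍ y in Metric.closedBall x r, ‖f y - f x‖) (𝓝[>] 0) (𝓝 0) := by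
    refine hx (fun _ => x) id tendsto_id ?_
    filter_upwards [self_mem_nhdsWithin] with r hr
    exact Metric.mem_closedBall_self (by simpa using (le_of_lt (by simpa using hr : (0:ℝ) < r)))
  have hg : Tendsto (fun r : ℝ =>
      ENNReal.ofReal ((⨍ y in Metric.closedBall x r, ‖f y - f x‖) / ε)) (𝓝[>] 0) (𝓝 0) := by
    have := (havg.div_const ε)
    rw [zero_div] at this
    simpa using ENNReal.tendsto_ofReal this
  refine tendsto_of_tendsto_of_tendsto_of_le_of_le' tendsto_const_nhds hg
    (Eventually.of_forall fun r => zero_le) ?_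
  filter_upwards [self_mem_nhdsWithin] with r hr
  have hr0 : (0:ℝ) < r := hr
  set CB := Metric.closedBall x r
  have hint : IntegrableOn (fun y => ‖f y - f x‖) CB volume :=
    ((hf.integrableOn_isCompact (isCompact_closedBall x r)).sub
      (integrableOn_const measure_closedBall_lt_top.ne)).norm
  have hBpos : volume (Metric.ball x r) ≠ 0 := (measure_ball_pos volume x hr0).ne'
  have hBtop : volume (Metric.ball x r) ≠ ⊤ := measure_ball_lt_top.ne
  rw [ENNReal.div_le_iff_le_mul (Or.inl hBpos) (Or.inl hBtop)]
  have hmg : Measurable fun y => ‖f y - f x‖ := (hmeas.sub measurable_const).norm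
  -- Markov inequality
  have hmarkov : ENNReal.ofReal ε * volume {y ∈ Metric.ball x r | ε ≤ ‖f y - f x‖} ≤
      ∫⁻ y in CB, ENNReal.ofReal ‖f y - f x‖ := by
    refine le_trans (mul_le_mul_right ?_ _) (mul_meas_ge_le_lintegral₀
      hmg.ennreal_ofReal.aemeasurable (ENNReal.ofReal ε))
    rw [Measure.restrict_apply₀]
    · refine measure_mono ?_
      rintro y ⟨hy1, hy2⟩
      exact ⟨ENNReal.ofReal_le_ofReal hy2, Metric.ball_subset_closedBall hy1⟩
    · exact (measurableSet_le measurable_const hmg.ennreal_ofReal).nullMeasurableSet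
  have hlin : (∫⁻ y in CB, ENNReal.ofReal ‖f y - f x‖) =
      ENNReal.ofReal (∫ y in CB, ‖f y - f x‖) :=
    (ofReal_integral_eq_lintegral_ofReal hint
      (Eventually.of_forall fun y => norm_nonneg _)).symm
  have hCBtop : volume CB ≠ ⊤ := measure_closedBall_lt_top.ne
  have hCBvol : volume CB = volume (Metric.ball x r) := volume_closedBall_eq_ball x hr0
  have hV : (0:ℝ) < (volume CB).toReal :=
    ENNReal.toReal_pos (hCBvol ▸ hBpos) hCBtop
  have hintegral : (∫ y in CB, ‖f y - f x‖) =
      (volume CB).toReal * ⨍ y in CB, ‖f y - f x‖ := by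
    rw [setAverage_eq, measureReal_def, smul_eq_mul, ← mul_assoc, mul_inv_cancel₀ hV.ne', one_mul]
  have havg_nn : 0 ≤ ⨍ y in CB, ‖f y - f x‖ := by
    rw [setAverage_eq]
    exact smul_nonneg (by positivity) (integral_nonneg fun y => norm_nonneg _)
  calc volume {y ∈ Metric.ball x r | ε ≤ ‖f y - f x‖}
      ≤ ENNReal.ofReal (∫ y in CB, ‖f y - f x‖) / ENNReal.ofReal ε := by
        rw [ENNReal.le_div_iff_mul_le (Or.inl (by simpa using hε)) (Or.inl ENNReal.ofReal_ne_top),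
          mul_comm]
        exact hlin ▸ hmarkov
    _ = ENNReal.ofReal ((⨍ y in CB, ‖f y - f x‖) / ε) * volume (Metric.ball x r) := by
        rw [hintegral, ← ENNReal.ofReal_div_of_pos hε]
        have h1 : ((volume CB).toReal * ⨍ y in CB, ‖f y - f x‖) / ε =
            ((⨍ y in CB, ‖f y - f x‖) / ε) * (volume CB).toReal := by ring
        rw [h1, ENNReal.ofReal_mul (div_nonneg havg_nn hε.le),
          ENNReal.ofReal_toReal hCBtop, hCBvol]

/-- Lemma 1, first part: for a locally bounded measurable `f`, with `N_f` the
(null) complement of its points of approximate continuity, images of balls minus `N_f` are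
contained in the closure of images of balls minus `N_f ∪ N`, and the closed convex hulls agree. -/
theorem filippov_lemma1_images (d l : ℕ) (f : Euc d → Euc l)
    (hmeas : Measurable f) (hbdd : LocBdd f)
    (Nf : Set (Euc d)) (hNf : Nf = {x : Euc d | ¬ ApproxContAt f x})
    (xbar : Euc d) (δ : ℝ) (hδ : 0 < δ) (N : Set (Euc d)) (hN : volume N = 0) :
    f '' (Metric.ball xbar δ \ Nf) ⊆ closure (f '' (Metric.ball xbar δ \ (Nf ∪ N))) ∧
    clco (f '' (Metric.ball xbar δ \ Nf)) = clco (f '' (Metric.ball xbar δ \ (Nf ∪ N))) := by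
  have hNfnull : volume Nf = 0 := by
    rw [hNf]
    exact ae_approxContAt hmeas (LocBdd.locallyIntegrable hmeas hbdd)
  have hnull : volume (Nf ∪ N) = 0 := measure_union_null hNfnull hN
  have hsub : f '' (Metric.ball xbar δ \ Nf) ⊆
      closure (f '' (Metric.ball xbar δ \ (Nf ∪ N))) := by
    rintro _ ⟨x, ⟨hxb, hxNf⟩, rfl⟩
    rw [Metric.mem_closure_iff]
    intro ε hε
    have hac : ApproxContAt f x := by
      by_contra h
      exact hxNf (hNf ▸ h)
    obtain ⟨r, hr, hrsub⟩ := Metric.isOpen_iff.mp Metric.isOpen_ball x hxb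
    have hev : ∀ᶠ ρ in 𝓝[>] (0:ℝ),
        volume {y ∈ Metric.ball x ρ | ε ≤ ‖f y - f x‖} / volume (Metric.ball x ρ) < 1 :=
      (hac ε hε).eventually_lt_const one_pos
    obtain ⟨ρ, hρlt, hρ0, hρr⟩ :=
      (hev.and (Ioo_mem_nhdsGT_of_mem ⟨le_refl 0, hr⟩)).exists
    have hBpos : volume (Metric.ball x ρ) ≠ 0 := (measure_ball_pos volume x hρ0).ne'
    have hBtop : volume (Metric.ball x ρ) ≠ ⊤ := measure_ball_lt_top.ne
    have hbad : volume {y ∈ Metric.ball x ρ | ε ≤ ‖f y - f x‖} < volume (Metric.ball x ρ) := by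
      have := (ENNReal.div_lt_iff (Or.inl hBpos) (Or.inl hBtop)).mp hρlt
      simpa using this
    set S : Set (Euc d) := {y | ε ≤ ‖f y - f x‖}
    set G : Set (Euc d) := Metric.ball x ρ \ (S ∪ (Nf ∪ N))
    have hGpos : volume G ≠ 0 := by
      intro hG0
      have h1 : volume (Metric.ball x ρ) ≤
          volume (Metric.ball x ρ ∩ S) + volume (Metric.ball x ρ \ S) :=
        measure_le_inter_add_diff volume _ _
      have h2 : Metric.ball x ρ \ S ⊆ G ∪ (Nf ∪ N) := by
        rintro y ⟨hy1, hy2⟩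
        by_cases hy3 : y ∈ Nf ∪ N
        · exact Or.inr hy3
        · exact Or.inl ⟨hy1, fun hy4 => hy4.elim hy2 hy3⟩
      have h3 : volume (Metric.ball x ρ \ S) = 0 :=
        le_antisymm (le_trans (measure_mono h2)
          (le_trans (measure_union_le _ _) (by rw [hG0, hnull, add_zero]))) zero_le
      have h4 : volume (Metric.ball x ρ ∩ S) =
          volume {y ∈ Metric.ball x ρ | ε ≤ ‖f y - f x‖} := rfl
      rw [h3, add_zero, h4] at h1
      exact absurd h1 (not_le.mpr hbad)
    obtain ⟨y, hyρ, hyS⟩ := nonempty_of_measure_ne_zero hGpos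
    refine ⟨f y, ⟨y, ⟨?_, fun h => hyS (Or.inr h)⟩, rfl⟩, ?_⟩
    · exact hrsub (Metric.ball_subset_ball hρr.le hyρ)
    · have : ¬ ε ≤ ‖f y - f x‖ := fun h => hyS (Or.inl h)
      rw [dist_eq_norm, norm_sub_rev]
      exact lt_of_not_ge this
  refine ⟨hsub, ?_⟩
  have hconv : Convex ℝ (clco (f '' (Metric.ball xbar δ \ (Nf ∪ N)))) :=
    (convex_convexHull ℝ _).closure
  refine le_antisymm ?_ ?_
  · have h1 : f '' (Metric.ball xbar δ \ Nf) ⊆ clco (f '' (Metric.ball xbar δ \ (Nf ∪ N))) :=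
      hsub.trans (closure_mono (subset_convexHull ℝ _))
    exact closure_minimal (convexHull_min h1 hconv) isClosed_closure
  · exact closure_mono (convexHull_mono (image_mono
      (diff_subset_diff_right subset_union_left)))
end
end

section
/- Let Φ : ℝ^d ⇒ ℝ^ℓ be a cusco map. Then there exists a Lebesgue-null set N_Φ ⊆ ℝ^d such that for every x̄ ∈ ℝ^d, every δ > 0 and every Lebesgue-null set N ⊆ ℝ^d: (a) Φ(B_δ(x̄) \ N_Φ) ⊆ closure( Φ(B_δ(x̄) \ (N_Φ ∪ N)) ); (b) clco Φ(B_δ(x̄) \ N_Φ) = clco Φ(B_δ(x̄) \ (N_Φ ∪ N)); and (c) clco Φ(B_δ(x̄) \ N_Φ) = ⋂_{N Lebesgue-null} clco Φ(B_δ(x̄) \ N). -/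
open MeasureTheory Metric Filter Set Topology

noncomputable section

lemma locally_null_aux {d : ℕ} (S : Set (Euc d)) :
    volume (S ∩ {x | ∃ η > (0:ℝ), volume (S ∩ Metric.ball x η) = 0}) = 0 := by
  apply measure_null_of_locally_null
  rintro x ⟨hxS, η, hη, hnull⟩
  refine ⟨S ∩ Metric.ball x η, ?_, hnull⟩
  rw [mem_nhdsWithin]
  exact ⟨Metric.ball x η, isOpen_ball, mem_ball_self hη, fun y hy => ⟨hy.2.1, hy.1⟩⟩

/-- Corollary for cusco maps: for every cusco map `Φ` there is a Lebesgue-null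
set `N_Φ` such that for all `xbar`, `δ > 0` and null `N`, (a) the image of the punctured ball is
contained in the closure of the image avoiding also `N`, (b) closed convex hulls agree, and
(c) the closed convex hull equals the intersection over all null sets. -/
theorem cusco_null_set_images (d l : ℕ) (Φ : Euc d → Set (Euc l)) (hΦ : IsCusco Φ) :
    ∃ NΦ : Set (Euc d), volume NΦ = 0 ∧
      (∀ (xbar : Euc d) (δ : ℝ), 0 < δ → ∀ N : Set (Euc d), volume N = 0 →
        (⋃ a ∈ Metric.ball xbar δ \ NΦ, Φ a) ⊆
            closure (⋃ a ∈ Metric.ball xbar δ \ (NΦ ∪ N), Φ a) ∧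
        clco (⋃ a ∈ Metric.ball xbar δ \ NΦ, Φ a) =
            clco (⋃ a ∈ Metric.ball xbar δ \ (NΦ ∪ N), Φ a)) ∧
      (∀ (xbar : Euc d) (δ : ℝ), 0 < δ →
        clco (⋃ a ∈ Metric.ball xbar δ \ NΦ, Φ a) =
          ⋂ (N : Set (Euc d)) (_ : volume N = 0),
            clco (⋃ a ∈ Metric.ball xbar δ \ N, Φ a)) := by
  classical
  have hdense : DenseRange (TopologicalSpace.denseSeq (Euc l)) :=
    TopologicalSpace.denseRange_denseSeq (Euc l)
  set e : ℕ → Euc l := TopologicalSpace.denseSeq (Euc l) with he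
  set S : ℕ → ℕ → Set (Euc d) := fun i n =>
    {x | (Φ x ∩ Metric.closedBall (e i) (1/(n+1))).Nonempty} with hS
  refine ⟨⋃ (i : ℕ) (n : ℕ),
    (S i n ∩ {x | ∃ η > (0:ℝ), volume (S i n ∩ Metric.ball x η) = 0}), ?_, ?_, ?_⟩
  · exact measure_iUnion_null fun i => measure_iUnion_null fun n => locally_null_aux _
  all_goals
    set NΦ : Set (Euc d) := ⋃ (i : ℕ) (n : ℕ),
      (S i n ∩ {x | ∃ η > (0:ℝ), volume (S i n ∩ Metric.ball x η) = 0}) with hNΦ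
  all_goals
    have hNΦ0 : volume NΦ = 0 :=
      measure_iUnion_null fun i => measure_iUnion_null fun n => locally_null_aux _
  all_goals
    have key : ∀ (xbar : Euc d) (δ : ℝ), 0 < δ → ∀ N : Set (Euc d), volume N = 0 →
        (⋃ a ∈ Metric.ball xbar δ \ NΦ, Φ a) ⊆
          closure (⋃ a ∈ Metric.ball xbar δ \ (NΦ ∪ N), Φ a) := by
      intro xbar δ hδ N hN z hz
      simp only [mem_iUnion, exists_prop] at hz
      obtain ⟨x, ⟨hxball, hxN⟩, hzx⟩ := hz
      rw [Metric.mem_closure_iff]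
      intro ε hε
      obtain ⟨n, hn⟩ := exists_nat_one_div_lt (show (0:ℝ) < ε/2 by linarith)
      obtain ⟨i, hi⟩ := hdense.exists_dist_lt z
        (show (0:ℝ) < 1/(n+1) by positivity)
      have hxS : x ∈ S i n := by
        refine ⟨z, hzx, ?_⟩
        rw [Metric.mem_closedBall]
        exact le_of_lt hi
      have hnotnull : ∀ η > (0:ℝ), volume (S i n ∩ Metric.ball x η) ≠ 0 := by
        intro η hη h0
        exact hxN (mem_iUnion.2 ⟨i, mem_iUnion.2 ⟨n, hxS, η, hη, h0⟩⟩)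
      set η : ℝ := δ - dist x xbar with hηdef
      have hη : 0 < η := by
        have := Metric.mem_ball.1 hxball; simp [hηdef]; linarith
      have hball : Metric.ball x η ⊆ Metric.ball xbar δ := by
        intro y hy
        rw [Metric.mem_ball] at hy ⊢
        have := dist_triangle y x xbar
        linarith
      have hne : ((S i n ∩ Metric.ball x η) \ (NΦ ∪ N)).Nonempty := by
        by_contra hemp
        rw [not_nonempty_iff_eq_empty, diff_eq_empty] at hemp
        refine hnotnull η hη (le_antisymm ?_ zero_le)
        calc volume (S i n ∩ Metric.ball x η) ≤ volume (NΦ ∪ N) := measure_mono hemp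
          _ ≤ volume NΦ + volume N := measure_union_le _ _
          _ = 0 := by rw [hNΦ0, hN, add_zero]
      obtain ⟨y, ⟨hyS, hyball⟩, hyN⟩ := hne
      obtain ⟨w, hwΦ, hwball⟩ := hyS
      refine ⟨w, ?_, ?_⟩
      · simp only [mem_iUnion, exists_prop]
        exact ⟨y, ⟨hball hyball, hyN⟩, hwΦ⟩
      · have h1 : dist z (e i) < 1/(n+1) := hi
        have h2 : dist (e i) w ≤ 1/(n+1) := by
          rw [dist_comm]; exact Metric.mem_closedBall.1 hwball
        calc dist z w ≤ dist z (e i) + dist (e i) w := dist_triangle _ _ _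
          _ < 1/(n+1) + 1/(n+1) := by linarith
          _ < ε/2 + ε/2 := by linarith
          _ = ε := by ring
  all_goals
    have hb : ∀ (xbar : Euc d) (δ : ℝ), 0 < δ → ∀ N : Set (Euc d), volume N = 0 →
        clco (⋃ a ∈ Metric.ball xbar δ \ NΦ, Φ a) =
          clco (⋃ a ∈ Metric.ball xbar δ \ (NΦ ∪ N), Φ a) := by
      intro xbar δ hδ N hN
      apply Set.Subset.antisymm
      · apply closure_minimal _ isClosed_closure
        apply convexHull_min _ ((convex_convexHull ℝ _).closure)
        refine (key xbar δ hδ N hN).trans (closure_mono (subset_convexHull ℝ _))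
      · exact closure_mono (convexHull_mono (biUnion_subset_biUnion_left
          (diff_subset_diff_right subset_union_left)))
  · exact fun xbar δ hδ N hN => ⟨key xbar δ hδ N hN, hb xbar δ hδ N hN⟩
  · intro xbar δ hδ
    apply Set.Subset.antisymm
    · refine subset_iInter₂ fun N hN => ?_
      rw [hb xbar δ hδ N hN]
      exact closure_mono (convexHull_mono (biUnion_subset_biUnion_left
        (diff_subset_diff_right subset_union_right)))
    · exact iInter₂_subset NΦ hNΦ0
end
end

section
/- Let f : ℝ^d → ℝ^ℓ be a measurable and locally bounded function. Then there exists a Lebesgue-null set N_f ⊆ ℝ^d such that F_f(x) = ⋂_{δ>0} clco f(B_δ(x) \ N_f) for all x ∈ ℝ^d, and moreover f(x) ∈ F_f(x) for Lebesgue-almost all x ∈ ℝ^d. -/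
open MeasureTheory Metric Filter Set Topology

noncomputable section

/-- Proposition (i): there is a null set `N_f` realizing the Filippov
regularization of `f`, and `f(x) ∈ F_f(x)` for almost all `x`. -/
theorem filippovReg_single_null_set (d l : ℕ) (f : Euc d → Euc l)
    (hmeas : Measurable f) (hbdd : LocBdd f) :
    ∃ Nf : Set (Euc d), volume Nf = 0 ∧
      (∀ x : Euc d, FilippovReg f x =
        ⋂ (δ : ℝ) (_ : 0 < δ), clco (f '' (Metric.ball x δ \ Nf))) ∧
      (∀ᵐ x : Euc d, f x ∈ FilippovReg f x) := by
  obtain ⟨bd, hbdc, -, hbd⟩ := TopologicalSpace.exists_countable_basis (Euc d)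
  obtain ⟨bl, hblc, -, hbl⟩ := TopologicalSpace.exists_countable_basis (Euc l)
  set S : Set (Set (Euc d) × Set (Euc l)) :=
    {p | p.1 ∈ bd ∧ p.2 ∈ bl ∧ volume (p.1 ∩ f ⁻¹' p.2) = 0} with hS
  have hScnt : S.Countable := (hbdc.prod hblc).mono (by
    intro p hp
    exact Set.mem_prod.2 ⟨hp.1, hp.2.1⟩)
  set Nf : Set (Euc d) := ⋃ p ∈ S, p.1 ∩ f ⁻¹' p.2 with hNf
  have hNf0 : volume Nf = 0 :=
    by
    rw [hNf, measure_biUnion_null_iff hScnt]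
    intro p hp
    exact hp.2.2
  -- key lemma
  have key : ∀ x ∉ Nf, ∀ δ : ℝ, 0 < δ → ∀ N : Set (Euc d), volume N = 0 →
      f x ∈ closure (f '' (Metric.ball x δ \ N)) := by
    intro x hx δ hδ N hN
    rw [_root_.mem_closure_iff]
    intro o ho hfo
    obtain ⟨V, hVbl, hfV, hVo⟩ := hbl.exists_subset_of_mem_open hfo ho
    obtain ⟨U, hUbd, hxU, hUb⟩ := hbd.exists_subset_of_mem_open (mem_ball_self hδ) isOpen_ball
    have hpos : volume (U ∩ f ⁻¹' V) ≠ 0 := by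
      intro h0
      exact hx (mem_biUnion (show (U, V) ∈ S from ⟨hUbd, hVbl, h0⟩) ⟨hxU, hfV⟩)
    have hne : ((U ∩ f ⁻¹' V) \ N).Nonempty := by
      rw [Set.nonempty_iff_ne_empty]
      intro he
      apply hpos
      have hsub : U ∩ f ⁻¹' V ⊆ N := by
        intro z hz
        by_contra hzN
        exact (Set.eq_empty_iff_forall_notMem.1 he) z ⟨hz, hzN⟩
      exact le_antisymm ((measure_mono hsub).trans hN.le) (zero_le)
    obtain ⟨z, ⟨hzU, hzV⟩, hzN⟩ := hne
    exact ⟨f z, hVo hzV, Set.mem_image_of_mem f ⟨hUb hzU, hzN⟩⟩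
  have clco_closed : ∀ (B : Set (Euc l)), IsClosed (clco B) := fun B => isClosed_closure
  have clco_convex : ∀ (B : Set (Euc l)), Convex ℝ (clco B) :=
    fun B => (convex_convexHull ℝ B).closure
  have sub_clco : ∀ (B : Set (Euc l)), closure B ⊆ clco B :=
    fun B => closure_mono (subset_convexHull ℝ B)
  refine ⟨Nf, hNf0, fun x => ?_, ?_⟩
  · apply Set.Subset.antisymm
    · intro y hy
      simp only [FilippovReg, Set.mem_iInter] at hy ⊢
      intro δ hδ
      exact hy Nf hNf0 δ hδ
    · intro y hy
      simp only [FilippovReg, Set.mem_iInter] at hy ⊢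
      intro N hN δ hδ
      refine (?_ : clco (f '' (ball x δ \ Nf)) ⊆ clco (f '' (ball x δ \ N))) (hy δ hδ)
      apply closure_minimal _ (clco_closed _)
      apply convexHull_min _ (clco_convex _)
      rintro w ⟨z, ⟨hzb, hzNf⟩, rfl⟩
      have hδ' : (0:ℝ) < δ - dist z x := by
        rw [mem_ball] at hzb; linarith
      have h1 : f z ∈ closure (f '' (ball z (δ - dist z x) \ N)) := key z hzNf _ hδ' N hN
      have h2 : ball z (δ - dist z x) ⊆ ball x δ := by
        intro w hw
        rw [mem_ball] at hw ⊢
        calc dist w x ≤ dist w z + dist z x := dist_triangle _ _ _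
          _ < δ := by linarith
      exact sub_clco _ (closure_mono (Set.image_mono (Set.diff_subset_diff_left h2)) h1)
  · filter_upwards [measure_eq_zero_iff_ae_notMem.1 hNf0] with x hx
    simp only [FilippovReg, Set.mem_iInter]
    intro N hN δ hδ
    exact sub_clco _ (closure_mono (Set.image_mono (Set.diff_subset_diff_left (le_refl _))) (key x hx δ hδ N hN))
end
end

section
/- Let f : ℝ^d → ℝ^ℓ be a measurable and locally bounded function. Then F_f is the smallest cusco map Φ such that f(x) ∈ Φ(x) for Lebesgue-almost all x ∈ ℝ^d; that is, F_f is cusco, f(x) ∈ F_f(x) for almost all x, and if Φ : ℝ^d ⇒ ℝ^ℓ is any cusco map with f(x) ∈ Φ(x) for almost all x, then F_f(x) ⊆ Φ(x) for all x ∈ ℝ^d. -/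
open MeasureTheory Metric Filter Set Topology
open scoped ENNReal NNReal

noncomputable section

namespace FilippovAux

variable {d l : ℕ}

lemma clco_mono {n : ℕ} {A B : Set (Euc n)} (h : A ⊆ B) : clco A ⊆ clco B :=
  closure_mono (convexHull_mono h)

lemma subset_clco {n : ℕ} (A : Set (Euc n)) : A ⊆ clco A :=
  (subset_convexHull ℝ A).trans subset_closure

lemma filippovReg_subset (f : Euc d → Euc l) (x : Euc d) {N : Set (Euc d)}
    (hN : volume N = 0) {δ : ℝ} (hδ : 0 < δ) :
    FilippovReg f x ⊆ clco (f '' (Metric.ball x δ \ N)) := fun z hz => by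
  simp only [FilippovReg, mem_iInter] at hz; exact hz N hN δ hδ

lemma nonempty_diff_of_pos {A N : Set (Euc d)} (hA : 0 < volume A) (hN : volume N = 0) :
    (A \ N).Nonempty := by
  rw [nonempty_iff_ne_empty]
  intro h
  have : A ⊆ N := by
    intro a ha
    by_contra haN
    exact absurd (show a ∈ A \ N from ⟨ha, haN⟩) (h ▸ notMem_empty a)
  exact absurd (le_antisymm (le_trans (measure_mono this) hN.le) zero_le) hA.ne'

lemma ae_approx (f : Euc d → Euc l) (hmeas : Measurable f) :
    ∀ᵐ x : Euc d, ∀ ε > (0 : ℝ), ∀ δ > (0 : ℝ),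
      0 < volume {y | y ∈ Metric.ball x δ ∧ dist (f y) (f x) < ε} := by
  obtain ⟨D, hDc, hDd⟩ := TopologicalSpace.exists_countable_dense (Euc l)
  set S : Euc l → ℕ → Set (Euc d) := fun q n => f ⁻¹' Metric.ball q (1 / (n + 1)) with hS
  have key : ∀ᵐ x : Euc d, ∀ q ∈ D, ∀ n : ℕ,
      Tendsto (fun r => volume (S q n ∩ closedBall x r) / volume (closedBall x r)) (𝓝[>] 0)
        (𝓝 ((S q n).indicator 1 x)) := by
    rw [ae_ball_iff hDc]
    intro q _
    rw [ae_all_iff]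
    intro n
    exact Besicovitch.ae_tendsto_measure_inter_div_of_measurableSet volume
      (hmeas measurableSet_ball)
  filter_upwards [key] with x hx ε hε δ hδ
  obtain ⟨n, hn⟩ := exists_nat_one_div_lt (half_pos hε)
  obtain ⟨q, hqD, hq⟩ := hDd.exists_dist_lt (f x) (show (0:ℝ) < 1 / (n + 1) by positivity)
  have hxS : x ∈ S q n := by simpa [hS, Metric.mem_ball] using hq
  have htend := hx q hqD n
  rw [indicator_of_mem hxS] at htend
  simp only [Pi.one_apply] at htend
  have h1 : ∀ᶠ r in 𝓝[>] (0:ℝ),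
      0 < volume (S q n ∩ closedBall x r) / volume (closedBall x r) :=
    htend (Ioi_mem_nhds (by norm_num : (0:ℝ≥0∞) < 1))
  have h2 : Ioo (0:ℝ) δ ∈ 𝓝[>] (0:ℝ) := Ioo_mem_nhdsGT_of_mem ⟨le_refl 0, hδ⟩
  obtain ⟨r, hr1, hr2⟩ := (h1.and h2).exists
  have hnum : 0 < volume (S q n ∩ closedBall x r) := by
    by_contra h
    rw [not_lt, le_zero_iff] at h
    rw [h, ENNReal.zero_div] at hr1
    exact lt_irrefl _ hr1
  refine lt_of_lt_of_le hnum (measure_mono ?_)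
  rintro y ⟨hy1, hy2⟩
  refine ⟨closedBall_subset_ball hr2.2 hy2, ?_⟩
  · have hyq : dist (f y) q < 1 / (n + 1) := by simpa [hS, Metric.mem_ball] using hy1
    calc dist (f y) (f x) ≤ dist (f y) q + dist (f x) q := dist_triangle_right _ _ _
    _ < 1 / (n + 1) + 1 / (n + 1) := add_lt_add hyq hq
    _ < ε / 2 + ε / 2 := add_lt_add hn hn
    _ = ε := add_halves ε


lemma ae_mem (f : Euc d → Euc l) (hmeas : Measurable f) :
    ∀ᵐ x : Euc d, f x ∈ FilippovReg f x := by
  filter_upwards [ae_approx f hmeas] with x hx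
  simp only [FilippovReg, mem_iInter]
  intro N hN δ hδ
  have : f x ∈ closure (f '' (Metric.ball x δ \ N)) := by
    rw [Metric.mem_closure_iff]
    intro ε hε
    obtain ⟨y, hyA, hyN⟩ := nonempty_diff_of_pos (hx ε hε δ hδ) hN
    exact ⟨f y, mem_image_of_mem f ⟨hyA.1, hyN⟩, by rw [dist_comm]; exact hyA.2⟩
  exact closure_mono (subset_convexHull ℝ _) this

lemma filippov_props (f : Euc d → Euc l) (hbdd : LocBdd f) (x : Euc d) :
    ((FilippovReg f x).Nonempty ∧ IsCompact (FilippovReg f x) ∧ Convex ℝ (FilippovReg f x)) ∧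
      ∀ U : Set (Euc l), IsOpen U → FilippovReg f x ⊆ U →
        ∃ δ > (0:ℝ), ∀ y ∈ Metric.ball x δ, FilippovReg f y ⊆ U := by
  obtain ⟨δ₀, hδ₀, C, hC⟩ := hbdd x
  set ι := {N : Set (Euc d) // volume N = 0} × {r : ℝ // 0 < r} with hι'
  have hι : Nonempty ι := ⟨⟨⟨∅, measure_empty⟩, ⟨1, one_pos⟩⟩⟩
  set T : ι → Set (Euc l) :=
    fun p => clco (f '' (Metric.ball x (min p.2.1 δ₀) \ p.1.1)) with hT
  have hEq : FilippovReg f x = ⋂ p, T p := by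
    apply subset_antisymm
    · exact subset_iInter fun p => filippovReg_subset f x p.1.2 (lt_min p.2.2 hδ₀)
    · intro z hz
      simp only [FilippovReg, mem_iInter]
      intro N hN δ hδ
      have h1 := mem_iInter.1 hz ⟨⟨N, hN⟩, ⟨δ, hδ⟩⟩
      exact clco_mono (image_mono (diff_subset_diff_left
        (ball_subset_ball (min_le_left _ _)))) h1
  have hTsub : ∀ p, T p ⊆ closedBall 0 C := by
    intro p
    have him : f '' (Metric.ball x (min p.2.1 δ₀) \ p.1.1) ⊆ closedBall 0 C := by
      rintro _ ⟨y, hy, rfl⟩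
      rw [mem_closedBall_zero_iff]
      exact hC y (ball_subset_ball (min_le_right _ _) hy.1)
    exact closure_minimal (convexHull_min him (convex_closedBall 0 C)) isClosed_closedBall
  have hTc : ∀ p, IsCompact (T p) := fun p =>
    (isCompact_closedBall (0 : Euc l) C).of_isClosed_subset isClosed_closure (hTsub p)
  have hTcl : ∀ p, IsClosed (T p) := fun _ => isClosed_closure
  have hTne : ∀ p, (T p).Nonempty := by
    intro p
    have hpos : 0 < volume (Metric.ball x (min p.2.1 δ₀)) :=
      measure_ball_pos volume x (lt_min p.2.2 hδ₀)
    obtain ⟨y, hy⟩ := nonempty_diff_of_pos hpos p.1.2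
    exact ⟨f y, subset_clco _ (mem_image_of_mem f hy)⟩
  have hdir : Directed (· ⊇ ·) T := by
    intro p q
    refine ⟨⟨⟨p.1.1 ∪ q.1.1, measure_union_null p.1.2 q.1.2⟩,
      ⟨min p.2.1 q.2.1, lt_min p.2.2 q.2.2⟩⟩, ?_, ?_⟩
    · exact clco_mono (image_mono (diff_subset_diff
        (ball_subset_ball (min_le_min (min_le_left _ _) le_rfl)) subset_union_left))
    · exact clco_mono (image_mono (diff_subset_diff
        (ball_subset_ball (min_le_min (min_le_right _ _) le_rfl)) subset_union_right))
  have hclosed : IsClosed (FilippovReg f x) := by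
    rw [hEq]; exact isClosed_iInter hTcl
  constructor
  · refine ⟨?_, ?_, ?_⟩
    · rw [hEq]
      exact IsCompact.nonempty_iInter_of_directed_nonempty_isCompact_isClosed T hdir hTne hTc hTcl
    · exact (isCompact_closedBall (0 : Euc l) C).of_isClosed_subset hclosed
        (hEq ▸ (iInter_subset T hι.some).trans (hTsub _))
    · rw [hEq]
      exact convex_iInter fun p => (convex_convexHull ℝ _).closure
  · intro U hU hsubU
    have hex : ∃ p, T p ⊆ U := by
      by_contra h
      push_neg at h
      have hne' : ∀ p, (T p ∩ Uᶜ).Nonempty := by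
        intro p
        rcases not_subset.1 (h p) with ⟨z, hz1, hz2⟩
        exact ⟨z, hz1, hz2⟩
      obtain ⟨z, hz⟩ := IsCompact.nonempty_iInter_of_directed_nonempty_isCompact_isClosed
        (fun p => T p ∩ Uᶜ)
        (fun p q => by
          obtain ⟨r, h1, h2⟩ := hdir p q
          exact ⟨r, inter_subset_inter_left _ h1, inter_subset_inter_left _ h2⟩)
        hne' (fun p => (hTc p).inter_right hU.isClosed_compl)
        (fun p => (hTcl p).inter hU.isClosed_compl)
      have hz' := mem_iInter.1 hz
      have hzU : z ∈ U := by
        apply hsubU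
        rw [hEq]
        exact mem_iInter.2 fun p => (hz' p).1
      exact (hz' hι.some).2 hzU
    obtain ⟨p, hp⟩ := hex
    set r := min p.2.1 δ₀ with hr'
    have hr : 0 < r := lt_min p.2.2 hδ₀
    refine ⟨r / 2, half_pos hr, fun y hy => ?_⟩
    refine (filippovReg_subset f y p.1.2 (half_pos hr)).trans ?_
    refine Subset.trans ?_ hp
    refine clco_mono (image_mono (diff_subset_diff_left ?_))
    refine ball_subset_ball' ?_
    have := mem_ball.1 hy
    linarith


lemma minimality (f : Euc d → Euc l) (Φ : Euc d → Set (Euc l)) (hΦ : IsCusco Φ)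
    (haΦ : ∀ᵐ x : Euc d, f x ∈ Φ x) (x : Euc d) : FilippovReg f x ⊆ Φ x := by
  obtain ⟨husc, hval⟩ := hΦ
  obtain ⟨hne, hcpt, hconv⟩ := hval x
  intro z hz
  have hN : volume {a : Euc d | f a ∉ Φ a} = 0 := ae_iff.1 haΦ
  have hclz : z ∈ closure (Φ x) := by
    rw [closure_eq_iInter_cthickening]
    refine mem_iInter₂.2 fun ε hε => ?_
    obtain ⟨δ, hδ, hy⟩ := husc x (thickening ε (Φ x)) isOpen_thickening
      (self_subset_thickening hε _)
    have h1 : f '' (Metric.ball x δ \ {a : Euc d | f a ∉ Φ a}) ⊆ thickening ε (Φ x) := by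
      rintro _ ⟨y, ⟨hyb, hyN⟩, rfl⟩
      exact hy y hyb (not_not.1 hyN)
    have h2 : clco (f '' (Metric.ball x δ \ {a : Euc d | f a ∉ Φ a})) ⊆
        cthickening ε (Φ x) :=
      (closure_mono (convexHull_min h1 (hconv.thickening ε))).trans
        (closure_thickening_subset_cthickening ε _)
    exact h2 (filippovReg_subset f x hN hδ hz)
  rwa [hcpt.isClosed.closure_eq] at hclz
end FilippovAux

/-- Proposition (ii): `F_f` is the smallest cusco map containing `f(x)`
for almost all `x`. -/
theorem filippovReg_smallest_cusco (d l : ℕ) (f : Euc d → Euc l)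
    (hmeas : Measurable f) (hbdd : LocBdd f) :
    IsCusco (FilippovReg f) ∧
    (∀ᵐ x : Euc d, f x ∈ FilippovReg f x) ∧
    (∀ Φ : Euc d → Set (Euc l), IsCusco Φ → (∀ᵐ x : Euc d, f x ∈ Φ x) →
      ∀ x : Euc d, FilippovReg f x ⊆ Φ x) :=
  ⟨⟨fun x => (FilippovAux.filippov_props f hbdd x).2,
    fun x => (FilippovAux.filippov_props f hbdd x).1⟩,
    FilippovAux.ae_mem f hmeas,
    fun Φ hΦ haΦ => FilippovAux.minimality f Φ hΦ haΦ⟩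
end
end

section
/- Let f : ℝ^d → ℝ^ℓ be a measurable and locally bounded function. Then there exists a (necessarily measurable) function f̄ : ℝ^d → ℝ^ℓ equal to f Lebesgue-almost everywhere such that F_f(x) = ⋂_{δ>0} clco f̄(B_δ(x)) for all x ∈ ℝ^d. -/
open MeasureTheory Metric Filter Set Topology

noncomputable section

namespace FilAux
variable {n d l : ℕ}

lemma clco_mono {A B : Set (Euc n)} (h : A ⊆ B) : clco A ⊆ clco B :=
  closure_mono (convexHull_mono h)

lemma isClosed_clco (A : Set (Euc n)) : IsClosed (clco A) := isClosed_closure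

lemma convex_clco (A : Set (Euc n)) : Convex ℝ (clco A) := (convex_convexHull ℝ A).closure

lemma subset_clco (A : Set (Euc n)) : A ⊆ clco A :=
  (subset_convexHull ℝ A).trans subset_closure

lemma clco_min {A C : Set (Euc n)} (h : A ⊆ C) (hc : Convex ℝ C) (hcl : IsClosed C) :
    clco A ⊆ C := closure_minimal (convexHull_min h hc) hcl

lemma clco_nonempty {A : Set (Euc n)} (h : A.Nonempty) : (clco A).Nonempty :=
  h.mono (subset_clco A)

lemma isCompact_clco_of_bdd {A : Set (Euc n)} {C : ℝ} (h : A ⊆ Metric.closedBall 0 C) :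
    IsCompact (clco A) :=
  (isCompact_closedBall (0 : Euc n) C).of_isClosed_subset (isClosed_clco A)
    (clco_min h (convex_closedBall 0 C) isClosed_closedBall)

variable {f : Euc d → Euc l}

lemma mem_filippov_iff {x : Euc d} {z : Euc l} :
    z ∈ FilippovReg f x ↔ ∀ N : Set (Euc d), volume N = 0 → ∀ δ : ℝ, 0 < δ →
      z ∈ clco (f '' (ball x δ \ N)) := by
  simp [FilippovReg, mem_iInter]

lemma filippov_subset {x : Euc d} {N : Set (Euc d)} (hN : volume N = 0) {δ : ℝ} (hδ : 0 < δ) :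
    FilippovReg f x ⊆ clco (f '' (ball x δ \ N)) := fun _ hz =>
  mem_filippov_iff.1 hz N hN δ hδ

lemma ball_diff_nonempty {x : Euc d} {N : Set (Euc d)} (hN : volume N = 0) {δ : ℝ}
    (hδ : 0 < δ) : (ball x δ \ N).Nonempty := by
  rw [Set.nonempty_iff_ne_empty]
  intro h
  have hsub : ball x δ ⊆ N := fun y hy => by
    by_contra hyN
    exact eq_empty_iff_forall_notMem.1 h y ⟨hy, hyN⟩
  have h2 := (measure_mono (μ := volume) hsub).trans_eq hN
  exact absurd (le_antisymm h2 zero_le) (measure_ball_pos volume x hδ).ne'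

lemma filippov_isClosed (x : Euc d) : IsClosed (FilippovReg f x) :=
  isClosed_iInter fun _ => isClosed_iInter fun _ => isClosed_iInter fun _ =>
    isClosed_iInter fun _ => isClosed_clco _

lemma filippov_convex (x : Euc d) : Convex ℝ (FilippovReg f x) :=
  convex_iInter fun _ => convex_iInter fun _ => convex_iInter fun _ =>
    convex_iInter fun _ => convex_clco _

/-- index type for the directed family -/
def Idx (d : ℕ) : Type := {p : Set (Euc d) × ℝ // volume p.1 = 0 ∧ 0 < p.2}

instance : Nonempty (Idx d) := ⟨⟨(∅, 1), by simp, one_pos⟩⟩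

/-- truncated family of compact sets whose intersection is the Filippov regularization -/
def Kset (f : Euc d → Euc l) (x : Euc d) (δ₀ : ℝ) (p : Idx d) : Set (Euc l) :=
  clco (f '' (ball x (min p.1.2 δ₀) \ p.1.1))

lemma Kset_directed (x : Euc d) (δ₀ : ℝ) : Directed (· ⊇ ·) (Kset f x δ₀) := by
  rintro ⟨⟨N₁, δ₁⟩, hN₁, hδ₁⟩ ⟨⟨N₂, δ₂⟩, hN₂, hδ₂⟩
  refine ⟨⟨(N₁ ∪ N₂, min δ₁ δ₂), measure_union_null hN₁ hN₂, lt_min hδ₁ hδ₂⟩, ?_, ?_⟩ <;>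
  · apply clco_mono
    apply image_mono
    apply diff_subset_diff
    · exact ball_subset_ball (by simp [min_le_left, min_le_right, min_le_of_left_le])
    · simp [subset_union_left, subset_union_right]

lemma iInter_Kset {x : Euc d} {δ₀ : ℝ} (hδ₀ : 0 < δ₀) :
    ⋂ p, Kset f x δ₀ p = FilippovReg f x := by
  apply Set.Subset.antisymm
  · intro z hz
    rw [mem_filippov_iff]
    intro N hN δ hδ
    have h1 : z ∈ Kset f x δ₀ ⟨(N, δ), hN, hδ⟩ := mem_iInter.1 hz _
    exact clco_mono (image_mono (diff_subset_diff_left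
      (ball_subset_ball (min_le_left _ _)))) h1
  · intro z hz
    rw [mem_iInter]
    rintro ⟨⟨N, δ⟩, hN, hδ⟩
    exact filippov_subset hN (lt_min hδ hδ₀) hz

lemma Kset_nonempty {x : Euc d} {δ₀ : ℝ} (hδ₀ : 0 < δ₀) (p : Idx d) :
    (Kset f x δ₀ p).Nonempty :=
  clco_nonempty ((ball_diff_nonempty p.2.1 (lt_min p.2.2 hδ₀)).image f)

lemma Kset_isCompact {x : Euc d} {δ₀ C : ℝ} (hC : ∀ y ∈ ball x δ₀, ‖f y‖ ≤ C) (p : Idx d) :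
    IsCompact (Kset f x δ₀ p) := by
  apply isCompact_clco_of_bdd (C := C)
  rintro _ ⟨y, ⟨hy, -⟩, rfl⟩
  rw [mem_closedBall_zero_iff]
  exact hC y (ball_subset_ball (min_le_right _ _) hy)

lemma filippov_nonempty (hbdd : LocBdd f) (x : Euc d) : (FilippovReg f x).Nonempty := by
  obtain ⟨δ₀, hδ₀, C, hC⟩ := hbdd x
  rw [← iInter_Kset (f := f) (x := x) hδ₀]
  exact IsCompact.nonempty_iInter_of_directed_nonempty_isCompact_isClosed _
    (Kset_directed x δ₀) (Kset_nonempty hδ₀) (Kset_isCompact hC)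
    (fun p => isClosed_clco _)

lemma filippov_isCompact (hbdd : LocBdd f) (x : Euc d) : IsCompact (FilippovReg f x) := by
  obtain ⟨δ₀, hδ₀, C, hC⟩ := hbdd x
  apply (Kset_isCompact hC ⟨(∅, δ₀), by simp, hδ₀⟩).of_isClosed_subset (filippov_isClosed x)
  rw [← iInter_Kset (f := f) (x := x) hδ₀]
  exact iInter_subset _ _

lemma filippov_subset_of_ball_subset {x y : Euc d} {N : Set (Euc d)} (hN : volume N = 0)
    {r δ : ℝ} (hr : 0 < r) (h : ball y r ⊆ ball x δ) :
    FilippovReg f y ⊆ clco (f '' (ball x δ \ N)) :=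
  (filippov_subset hN hr).trans (clco_mono (image_mono (diff_subset_diff_left h)))


lemma isClosed_hit (hbdd : LocBdd f) {D : Set (Euc l)} (hD : IsClosed D) :
    IsClosed {y | (FilippovReg f y ∩ D).Nonempty} := by
  rw [← isOpen_compl_iff]
  rw [Metric.isOpen_iff]
  intro y₀ hy₀
  obtain ⟨δ₀, hδ₀, C, hC⟩ := hbdd y₀
  have hempty : FilippovReg f y₀ ∩ D = ∅ := by
    by_contra h
    exact hy₀ (Set.nonempty_iff_ne_empty.2 h)
  -- directed family elimination
  have h0 : (Kset f y₀ δ₀ ⟨(∅, δ₀), by simp, hδ₀⟩ ∩ ⋂ p, (Kset f y₀ δ₀ p ∩ D)) = ∅ := by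
    rw [← Set.iInter_inter]
    rw [iInter_Kset hδ₀]
    rw [hempty, Set.inter_empty]
  obtain ⟨p, hp⟩ := (Kset_isCompact hC ⟨(∅, δ₀), by simp, hδ₀⟩).elim_directed_family_closed
    (fun p => Kset f y₀ δ₀ p ∩ D) (fun p => (isClosed_clco _).inter hD) h0
    (fun p q => by
      obtain ⟨r, h1, h2⟩ := Kset_directed (f := f) y₀ δ₀ p q
      exact ⟨r, Set.inter_subset_inter_left _ h1, Set.inter_subset_inter_left _ h2⟩)
  -- combine with base index
  obtain ⟨p', hp'1, hp'2⟩ := Kset_directed (f := f) y₀ δ₀ ⟨(∅, δ₀), by simp, hδ₀⟩ p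
  have hKD : Kset f y₀ δ₀ p' ∩ D = ∅ := by
    rw [Set.eq_empty_iff_forall_notMem]
    rintro z ⟨hz, hzD⟩
    exact eq_empty_iff_forall_notMem.1 hp z ⟨hp'1 hz, hp'2 hz, hzD⟩
  set r := min p'.1.2 δ₀ with hr
  have hrpos : 0 < r := lt_min p'.2.2 hδ₀
  refine ⟨r / 2, half_pos hrpos, ?_⟩
  intro y hy
  simp only [Set.mem_compl_iff, Set.mem_setOf_eq]
  intro hne
  obtain ⟨z, hzF, hzD⟩ := hne
  have hsub : ball y (r / 2) ⊆ ball y₀ r := ball_subset_ball' (by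
    rw [mem_ball] at hy
    linarith [hy])
  have : z ∈ Kset f y₀ δ₀ p' :=
    filippov_subset_of_ball_subset p'.2.1 (half_pos hrpos) hsub hzF
  exact eq_empty_iff_forall_notMem.1 hKD z ⟨this, hzD⟩

lemma ae_mem_filippov (hmeas : Measurable f) :
    ∀ᵐ x ∂(volume : Measure (Euc d)), f x ∈ FilippovReg f x := by
  have hsep : DenseRange (TopologicalSpace.denseSeq (Euc l)) :=
    TopologicalSpace.denseRange_denseSeq (Euc l)
  set e := TopologicalSpace.denseSeq (Euc l) with he
  set A : ℕ → ℕ → Set (Euc d) :=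
    fun k n => f ⁻¹' (ball (e k) (1 / (n + 1))) with hA
  have hAmeas : ∀ k n, MeasurableSet (A k n) := fun k n => hmeas measurableSet_ball
  have hae : ∀ᵐ x ∂(volume : Measure (Euc d)), ∀ k n,
      Tendsto (fun r => volume (A k n ∩ closedBall x r) / volume (closedBall x r)) (𝓝[>] 0)
        (𝓝 ((A k n).indicator 1 x)) := by
    rw [ae_all_iff]
    intro k
    rw [ae_all_iff]
    intro n
    exact Besicovitch.ae_tendsto_measure_inter_div_of_measurableSet volume (hAmeas k n)
  filter_upwards [hae] with x hx
  rw [mem_filippov_iff]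
  intro N hN δ hδ
  apply closure_mono (subset_convexHull ℝ _)
  rw [Metric.mem_closure_iff]
  intro ε hε
  obtain ⟨m, hm⟩ := exists_nat_one_div_lt (half_pos hε)
  obtain ⟨k, hk⟩ := hsep.exists_dist_lt (f x) (by positivity : (0:ℝ) < 1 / (m + 1))
  have hxA : x ∈ A k m := by
    simp only [hA, Set.mem_preimage, mem_ball]
    exact hk
  have htend := hx k m
  rw [Set.indicator_of_mem hxA] at htend
  have hev : ∀ᶠ r in 𝓝[>] (0:ℝ),
      ((1 : ENNReal)/2 < volume (A k m ∩ closedBall x r) / volume (closedBall x r) ∧ r < δ)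
        ∧ r ∈ Ioi (0:ℝ) := by
    refine Filter.Eventually.and (Filter.Eventually.and ?_ ?_) self_mem_nhdsWithin
    · exact htend.eventually (eventually_gt_nhds (by norm_num))
    · exact eventually_nhdsWithin_of_eventually_nhds (eventually_lt_nhds hδ)
  obtain ⟨r, ⟨hratio, hrδ⟩, hrpos⟩ := hev.exists
  have hne : volume (A k m ∩ closedBall x r) ≠ 0 := by
    intro h0
    rw [h0, ENNReal.zero_div] at hratio
    exact absurd hratio (by norm_num)
  have hne2 : volume ((A k m ∩ closedBall x r) \ N) ≠ 0 := by
    rwa [measure_diff_null hN]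
  obtain ⟨y, ⟨hyA, hycb⟩, hyN⟩ := nonempty_of_measure_ne_zero hne2
  refine ⟨f y, ⟨y, ⟨?_, hyN⟩, rfl⟩, ?_⟩
  · exact mem_ball.2 ((mem_closedBall.1 hycb).trans_lt hrδ)
  · have h1 : dist (f y) (e k) < 1 / (m + 1) := mem_ball.1 hyA
    have h2 : dist (f x) (f y) ≤ dist (f x) (e k) + dist (f y) (e k) := dist_triangle_right _ _ _
    have : (1:ℝ) / (m + 1) < ε / 2 := hm
    linarith

lemma min_norm_unique {K : Set (Euc l)} (hK : Convex ℝ K) {v w : Euc l} (hv : v ∈ K)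
    (hw : w ∈ K) (hvm : ∀ z ∈ K, ‖v‖ ≤ ‖z‖) (hwm : ∀ z ∈ K, ‖w‖ ≤ ‖z‖) : v = w := by
  have hm : (1/2 : ℝ) • v + (1/2 : ℝ) • w ∈ K :=
    hK hv hw (by norm_num) (by norm_num) (by norm_num)
  have h1 : ‖v‖ ≤ ‖(1/2 : ℝ) • v + (1/2 : ℝ) • w‖ := hvm _ hm
  have h2 : ‖v‖ = ‖w‖ := le_antisymm (hvm w hw) (hwm v hv)
  have hsm : ‖(1/2 : ℝ) • v + (1/2 : ℝ) • w‖ = ‖v + w‖ / 2 := by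
    rw [← smul_add, norm_smul]
    simp [abs_of_pos]
    ring
  have hp := parallelogram_law_with_norm ℝ v w
  have hvw : ‖v - w‖ = 0 := by
    nlinarith [norm_nonneg (v - w), norm_nonneg (v + w), norm_nonneg v]
  rw [norm_eq_zero, sub_eq_zero] at hvw
  exact hvw

/-- Measurability of "hit" sets with a norm constraint. -/
lemma measurable_hit_lt (hbdd : LocBdd f) {D : Set (Euc l)} (hD : IsClosed D) (t : ℝ) :
    MeasurableSet {y | ∃ v ∈ FilippovReg f y ∩ D, ‖v‖ < t} := by
  have : {y | ∃ v ∈ FilippovReg f y ∩ D, ‖v‖ < t} =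
      ⋃ (q : ℚ) (_ : (q : ℝ) < t),
        {y | (FilippovReg f y ∩ (D ∩ Metric.closedBall 0 q)).Nonempty} := by
    ext y
    simp only [Set.mem_setOf_eq, Set.mem_iUnion]
    constructor
    · rintro ⟨v, ⟨hvF, hvD⟩, hvt⟩
      obtain ⟨q, hq1, hq2⟩ := exists_rat_btwn hvt
      exact ⟨q, hq2, v, hvF, hvD, mem_closedBall_zero_iff.2 hq1.le⟩
    · rintro ⟨q, hq, v, hvF, hvD, hvq⟩
      exact ⟨v, ⟨hvF, hvD⟩, (mem_closedBall_zero_iff.1 hvq).trans_lt hq⟩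
  rw [this]
  exact MeasurableSet.iUnion fun q => MeasurableSet.iUnion fun _ =>
    (isClosed_hit hbdd (hD.inter isClosed_closedBall)).measurableSet

lemma exists_selection (hbdd : LocBdd f) :
    ∃ s : Euc d → Euc l, Measurable s ∧ ∀ y, s y ∈ FilippovReg f y := by
  have hmin : ∀ y : Euc d, ∃ v ∈ FilippovReg f y, ∀ z ∈ FilippovReg f y, ‖v‖ ≤ ‖z‖ := by
    intro y
    obtain ⟨v, hv1, hv2⟩ := (filippov_isCompact hbdd y).exists_isMinOn
      (filippov_nonempty hbdd y) (continuous_norm.continuousOn)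
    exact ⟨v, hv1, fun z hz => hv2 hz⟩
  choose s hsmem hsmin using hmin
  have hdd : Measurable (fun y => ‖s y‖) := by
    apply measurable_of_Iio
    intro t
    have : (fun y => ‖s y‖) ⁻¹' Iio t = {y | ∃ v ∈ FilippovReg f y ∩ Set.univ, ‖v‖ < t} := by
      ext y
      simp only [Set.mem_preimage, Set.mem_Iio, Set.mem_setOf_eq, Set.inter_univ]
      constructor
      · intro h; exact ⟨s y, hsmem y, h⟩
      · rintro ⟨v, hvF, hvt⟩; exact (hsmin y v hvF).trans_lt hvt
    rw [this]
    simpa [Set.inter_univ] using measurable_hit_lt hbdd isClosed_univ t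
  refine ⟨s, ?_, hsmem⟩
  apply measurable_of_isClosed
  intro C hC
  have key : s ⁻¹' C = ⋂ (m : ℕ), ⋃ (q : ℚ),
      ({y | (q : ℝ) < ‖s y‖ + 1 / (m + 1)} ∩
       {y | (FilippovReg f y ∩ (C ∩ Metric.closedBall 0 q)).Nonempty}) := by
    ext y
    simp only [Set.mem_preimage, Set.mem_iInter, Set.mem_iUnion, Set.mem_inter_iff,
      Set.mem_setOf_eq]
    constructor
    · intro hsy m
      obtain ⟨q, hq1, hq2⟩ := exists_rat_btwn
        (lt_add_of_pos_right (‖s y‖) (by positivity : (0:ℝ) < 1 / (m + 1)))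
      exact ⟨q, hq2, s y, hsmem y, hsy, mem_closedBall_zero_iff.2 hq1.le⟩
    · intro h
      set T : ℕ → Set (Euc l) :=
        fun m => FilippovReg f y ∩ (C ∩ Metric.closedBall 0 (‖s y‖ + 1 / (m + 1))) with hT
      have hTne : ∀ m, (T m).Nonempty := by
        intro m
        obtain ⟨q, hq, v, hvF, hvC, hvq⟩ := h m
        exact ⟨v, hvF, hvC, mem_closedBall_zero_iff.2
          ((mem_closedBall_zero_iff.1 hvq).trans hq.le)⟩
      have hTanti : Antitone T := by
        intro m m' hmm'
        apply Set.inter_subset_inter_right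
        apply Set.inter_subset_inter_right
        apply closedBall_subset_closedBall
        have : (1:ℝ) / (m' + 1) ≤ 1 / (m + 1) := by
          apply one_div_le_one_div_of_le (by positivity)
          have := (Nat.cast_le (α := ℝ)).2 hmm'; linarith
        linarith
      obtain ⟨v, hv⟩ := IsCompact.nonempty_iInter_of_directed_nonempty_isCompact_isClosed T
        hTanti.directed_ge hTne
        (fun m => ((filippov_isCompact hbdd y).inter_right (hC.inter isClosed_closedBall)))
        (fun m => ((filippov_isClosed y).inter (hC.inter isClosed_closedBall)))
      rw [Set.mem_iInter] at hv
      obtain ⟨hvF, hvC, -⟩ := hv 0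
      have hvle : ‖v‖ ≤ ‖s y‖ := by
        apply le_of_forall_pos_le_add
        intro ε hε
        obtain ⟨m, hm⟩ := exists_nat_one_div_lt hε
        obtain ⟨-, -, hvb⟩ := hv m
        have := mem_closedBall_zero_iff.1 hvb
        linarith
      have hveq : ‖v‖ = ‖s y‖ := le_antisymm hvle (hsmin y v hvF)
      have : v = s y := min_norm_unique (filippov_convex y) hvF (hsmem y)
        (fun z hz => hveq ▸ hsmin y z hz) (hsmin y) 
      rw [← this]
      exact hvC
  rw [key]
  apply MeasurableSet.iInter
  intro m
  apply MeasurableSet.iUnion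
  intro q
  apply MeasurableSet.inter
  · exact measurableSet_lt measurable_const (hdd.add_const _)
  · exact (isClosed_hit hbdd (hC.inter isClosed_closedBall)).measurableSet

end FilAux

open FilAux

/-- Proposition (iv): there is a (necessarily measurable) function `f̄` equal to
`f` almost everywhere such that `F_f` is the Krasovskii-type regularization of `f̄`. -/
theorem filippovReg_eq_krasovskii_of_modification (d l : ℕ) (f : Euc d → Euc l)
    (hmeas : Measurable f) (hbdd : LocBdd f) :
    ∃ fbar : Euc d → Euc l, Measurable fbar ∧ fbar =ᵐ[volume] f ∧
      ∀ x : Euc d, FilippovReg f x =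
        ⋂ (δ : ℝ) (_ : 0 < δ), clco (fbar '' Metric.ball x δ) := by
  classical
  obtain ⟨s, hsmeas, hsmem⟩ := exists_selection hbdd
  have hae := ae_mem_filippov hmeas (f := f)
  set N₀ : Set (Euc d) := toMeasurable volume {x | f x ∉ FilippovReg f x} with hN₀
  have hnull : volume {x : Euc d | f x ∉ FilippovReg f x} = 0 := by
    rw [← compl_setOf]
    simpa [ae_iff, compl_setOf] using hae
  have hN₀meas : MeasurableSet N₀ := measurableSet_toMeasurable _ _
  have hN₀null : volume N₀ = 0 := by
    rw [hN₀, measure_toMeasurable]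
    exact hnull
  have hN₀sub : {x : Euc d | f x ∉ FilippovReg f x} ⊆ N₀ := subset_toMeasurable _ _
  set fbar : Euc d → Euc l := N₀.piecewise s f with hfbar
  have hfbar_eqf : ∀ y ∉ N₀, fbar y = f y := fun y hy => Set.piecewise_eq_of_notMem _ _ _ hy
  have hfbar_mem : ∀ y, fbar y ∈ FilippovReg f y := by
    intro y
    by_cases hy : y ∈ N₀
    · rw [hfbar, Set.piecewise_eq_of_mem _ _ _ hy]
      exact hsmem y
    · rw [hfbar_eqf y hy]
      by_contra h
      exact hy (hN₀sub h)
  refine ⟨fbar, Measurable.piecewise hN₀meas hsmeas hmeas, ?_, ?_⟩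
  · rw [Filter.eventuallyEq_iff_exists_mem]
    refine ⟨N₀ᶜ, ?_, fun y hy => hfbar_eqf y hy⟩
    rw [mem_ae_iff, compl_compl]
    exact hN₀null
  · intro x
    apply Set.Subset.antisymm
    · intro z hz
      rw [Set.mem_iInter]
      intro δ
      rw [Set.mem_iInter]
      intro hδ
      have h1 : z ∈ clco (f '' (ball x δ \ N₀)) := filippov_subset hN₀null hδ hz
      refine clco_mono ?_ h1
      rintro - ⟨y, ⟨hyb, hyN⟩, rfl⟩
      exact ⟨y, hyb, (hfbar_eqf y hyN).symm ▸ rfl⟩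
    · intro z hz
      rw [mem_filippov_iff]
      intro N hN δ hδ
      have hz2 : z ∈ clco (fbar '' ball x (δ / 2)) := by
        have := Set.mem_iInter.1 hz (δ / 2)
        exact Set.mem_iInter.1 this (half_pos hδ)
      refine clco_min ?_ (convex_clco _) (isClosed_clco _) hz2
      rintro - ⟨y, hy, rfl⟩
      refine filippov_subset_of_ball_subset hN (half_pos hδ) ?_ (hfbar_mem y)
      apply ball_subset_ball'
      rw [mem_ball] at hy
      linarith
end
end

section
/- Let f : ℝ^d → ℝ^ℓ be a measurable and locally bounded function. Then for all x ∈ ℝ^d, F_f(x) = ⋂_{f̃ = f a.e.} ⋂_{δ>0} clco f̃(B_δ(x)), where the first intersection is taken over all functions f̃ : ℝ^d → ℝ^ℓ equal to f Lebesgue-almost everywhere. -/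
open MeasureTheory Metric Filter Set Topology

noncomputable section

/-- Proposition (vi): `F_f` equals the intersection, over all functions `f̃`
equal to `f` almost everywhere, of the Krasovskii-type regularizations of `f̃`. -/
theorem filippovReg_eq_iInter_ae_modifications (d l : ℕ) (f : Euc d → Euc l)
    (hmeas : Measurable f) (hbdd : LocBdd f) :
    ∀ x : Euc d, FilippovReg f x =
      ⋂ (ftil : Euc d → Euc l) (_ : ftil =ᵐ[volume] f) (δ : ℝ) (_ : 0 < δ),
        clco (ftil '' Metric.ball x δ) := by
  classical
  intro x
  apply Set.Subset.antisymm
  · intro v hv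
    simp only [Set.mem_iInter, FilippovReg] at *
    intro ftil hae δ hδ
    have hN : volume {y | ¬ ftil y = f y} = 0 := ae_iff.mp hae
    have h1 := hv {y | ¬ ftil y = f y} hN δ hδ
    refine closure_mono (convexHull_mono ?_) h1
    rintro _ ⟨y, ⟨hyb, hyN⟩, rfl⟩
    exact ⟨y, hyb, not_not.mp hyN⟩
  · intro v hv
    simp only [Set.mem_iInter, FilippovReg] at *
    intro N hN δ hδ
    have hball : volume (Metric.ball x δ \ N) ≠ 0 := by
      rw [measure_diff_null hN]
      exact (Metric.measure_ball_pos volume x hδ).ne'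
    obtain ⟨z₀, hz₀⟩ := nonempty_of_measure_ne_zero hball
    set ftil : Euc d → Euc l := fun y => if y ∈ N then f z₀ else f y with hftil
    have hae : ftil =ᵐ[volume] f := by
      refine (measure_eq_zero_iff_ae_notMem.mp hN).mono fun y hy => ?_
      simp [hftil, hy]
    have h1 := hv ftil hae δ hδ
    refine closure_mono (convexHull_mono ?_) h1
    rintro _ ⟨y, hyb, rfl⟩
    by_cases hy : y ∈ N
    · exact ⟨z₀, hz₀, by simp [hftil, hy]⟩
    · exact ⟨y, ⟨hyb, hy⟩, by simp [hftil, hy]⟩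
end
end

section
/- Let Φ : ℝ^d ⇒ ℝ^ℓ be a cusco map. Then the map m(Φ) is cusco and satisfies, for all x̄ ∈ ℝ^d, m(Φ)(x̄) ⊆ ⋂_{δ>0} clco Φ(B_δ(x̄)) ⊆ Φ(x̄). -/
open MeasureTheory Metric Filter Set Topology

noncomputable section

lemma clco_mono {n : ℕ} {A B : Set (Euc n)} (h : A ⊆ B) : clco A ⊆ clco B :=
  closure_mono (convexHull_mono h)

lemma cusco_thickening {d l : ℕ} {Φ : Euc d → Set (Euc l)} (hΦ : IsCusco Φ) (x : Euc d)
    {ε : ℝ} (hε : 0 < ε) :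
    ∃ δ > (0:ℝ), clco (⋃ a ∈ Metric.ball x δ, Φ a) ⊆ Metric.cthickening ε (Φ x) := by
  obtain ⟨δ, hδ, h⟩ := hΦ.1 x (Metric.thickening ε (Φ x)) Metric.isOpen_thickening
    (Metric.self_subset_thickening hε _)
  refine ⟨δ, hδ, ?_⟩
  have h1 : (⋃ a ∈ Metric.ball x δ, Φ a) ⊆ Metric.thickening ε (Φ x) := by
    simp only [Set.iUnion_subset_iff]; exact fun a ha => h a ha
  calc clco (⋃ a ∈ Metric.ball x δ, Φ a)
      ⊆ closure (Metric.thickening ε (Φ x)) :=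
        closure_mono (convexHull_min h1 ((hΦ.2 x).2.2.thickening ε))
    _ ⊆ _ := Metric.closure_thickening_subset_cthickening ε _

lemma iInter_clco_subset {d l : ℕ} {Φ : Euc d → Set (Euc l)} (hΦ : IsCusco Φ) (x : Euc d) :
    (⋂ (δ : ℝ) (_ : 0 < δ), clco (⋃ a ∈ Metric.ball x δ, Φ a)) ⊆ Φ x := by
  intro z hz
  have hne := (hΦ.2 x).1
  have hcl : IsClosed (Φ x) := (hΦ.2 x).2.1.isClosed
  rw [← hcl.closure_eq, EMetric.mem_closure_iff_infEdist_zero]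
  refine le_antisymm (ENNReal.le_of_forall_pos_le_add fun ε hε _ => ?_) zero_le
  rw [zero_add]
  have hε' : (0:ℝ) < (ε : ℝ) := by exact_mod_cast hε
  obtain ⟨δ, hδ, hsub⟩ := cusco_thickening hΦ x hε'
  have hz' : z ∈ clco (⋃ a ∈ Metric.ball x δ, Φ a) := by
    simp only [Set.mem_iInter] at hz; exact hz δ hδ
  have := Metric.mem_cthickening_iff.1 (hsub hz')
  rwa [ENNReal.ofReal_coe_nnreal] at this

lemma mPhi_subset_Z {d l : ℕ} (Φ : Euc d → Set (Euc l)) (x : Euc d) {N : Set (Euc d)}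
    (hN : volume N = 0) {δ : ℝ} (hδ : 0 < δ) :
    mPhi Φ x ⊆ clco (⋃ a ∈ Metric.ball x δ \ N, Φ a) := by
  intro z hz
  simp only [mPhi, Set.mem_iInter] at hz
  exact hz N hN δ hδ

lemma mPhi_key {d l : ℕ} {Φ : Euc d → Set (Euc l)} (hΦ : IsCusco Φ) (x : Euc d) :
    (mPhi Φ x).Nonempty ∧ ∀ U : Set (Euc l), IsOpen U → mPhi Φ x ⊆ U →
      ∃ δ > (0:ℝ), ∀ y ∈ Metric.ball x δ, mPhi Φ y ⊆ U := by
  obtain ⟨δ₀, hδ₀, hKsub⟩ := cusco_thickening hΦ x one_pos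
  set K := clco (⋃ a ∈ Metric.ball x δ₀, Φ a) with hKdef
  have hKcomp : IsCompact K := by
    refine Metric.isCompact_of_isClosed_isBounded isClosed_closure ?_
    exact ((hΦ.2 x).2.1.isBounded.cthickening).subset hKsub
  let I := {p : Set (Euc d) × ℝ // volume p.1 = 0 ∧ 0 < p.2}
  haveI : Nonempty I := ⟨⟨(∅, 1), by simp, one_pos⟩⟩
  let Z : I → Set (Euc l) := fun p => clco (⋃ a ∈ Metric.ball x p.1.2 \ p.1.1, Φ a) ∩ K
  -- basic: mPhi x ⊆ K
  have hmPhiK : ∀ (y : Euc d) (ρ : ℝ), 0 < ρ → Metric.ball y ρ ⊆ Metric.ball x δ₀ →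
      mPhi Φ y ⊆ K := by
    intro y ρ hρ hball
    have := mPhi_subset_Z Φ y (N := ∅) (by simp) hρ
    refine this.trans (clco_mono ?_)
    rw [Set.diff_empty]
    exact Set.biUnion_subset_biUnion_left hball
  have hZsub : ∀ p : I, mPhi Φ x ⊆ Z p := by
    rintro ⟨⟨N, δ⟩, hN, hδ⟩
    refine Set.subset_inter (mPhi_subset_Z Φ x hN hδ) ?_
    exact hmPhiK x δ₀ hδ₀ (Set.Subset.refl _)
  have hmem : mPhi Φ x = ⋂ p, Z p := by
    apply Set.Subset.antisymm (Set.subset_iInter hZsub)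
    intro z hz
    simp only [mPhi, Set.mem_iInter]
    intro N hN δ hδ
    exact (Set.mem_iInter.1 hz ⟨(N, δ), hN, hδ⟩).1
  have hZmono : ∀ (p q : I), p.1.1 ⊆ q.1.1 → q.1.2 ≤ p.1.2 → Z q ⊆ Z p := by
    rintro ⟨⟨N₁, δ₁⟩, h₁⟩ ⟨⟨N₂, δ₂⟩, h₂⟩ hN hδ
    refine Set.inter_subset_inter_left _ (clco_mono (Set.biUnion_subset_biUnion_left ?_))
    exact Set.diff_subset_diff (Metric.ball_subset_ball hδ) hN
  have hdir : Directed (· ⊇ ·) Z := by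
    rintro p q
    refine ⟨⟨(p.1.1 ∪ q.1.1, min p.1.2 q.1.2),
      measure_union_null p.2.1 q.2.1, lt_min p.2.2 q.2.2⟩, ?_, ?_⟩
    · exact hZmono p _ Set.subset_union_left (min_le_left _ _)
    · exact hZmono q _ Set.subset_union_right (min_le_right _ _)
  have hZne : ∀ p : I, (Z p).Nonempty := by
    rintro ⟨⟨N, δ⟩, hN, hδ⟩
    have hball : (Metric.ball x (min δ δ₀) \ N).Nonempty := by
      apply MeasureTheory.nonempty_of_measure_ne_zero (μ := volume)
      rw [measure_diff_null hN]
      exact (Metric.measure_ball_pos volume x (lt_min hδ hδ₀)).ne'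
    obtain ⟨a, ha⟩ := hball
    obtain ⟨v, hv⟩ := (hΦ.2 a).1
    refine ⟨v, ?_, ?_⟩
    · apply subset_closure; apply subset_convexHull
      exact Set.mem_biUnion ⟨Metric.ball_subset_ball (min_le_left _ _) ha.1, ha.2⟩ hv
    · apply subset_closure; apply subset_convexHull
      exact Set.mem_biUnion (Metric.ball_subset_ball (min_le_right _ _) ha.1) hv
  have hZcomp : ∀ p : I, IsCompact (Z p) := fun p =>
    hKcomp.inter_left isClosed_closure
  have hZclosed : ∀ p : I, IsClosed (Z p) := fun p =>
    isClosed_closure.inter hKcomp.isClosed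
  constructor
  · rw [hmem]
    exact IsCompact.nonempty_iInter_of_directed_nonempty_isCompact_isClosed Z hdir hZne hZcomp hZclosed
  · intro U hUopen hUsub
    have hexists : ∃ p, Z p ⊆ U := by
      by_contra hcon
      push_neg at hcon
      have hne' : ∀ p, (Z p ∩ Uᶜ).Nonempty := by
        intro p
        obtain ⟨z, hz, hzU⟩ := Set.not_subset.1 (hcon p)
        exact ⟨z, hz, hzU⟩
      have hdir' : Directed (· ⊇ ·) (fun p => Z p ∩ Uᶜ) := by
        intro p q
        obtain ⟨r, hr1, hr2⟩ := hdir p q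
        exact ⟨r, Set.inter_subset_inter_left _ hr1, Set.inter_subset_inter_left _ hr2⟩
      have := IsCompact.nonempty_iInter_of_directed_nonempty_isCompact_isClosed
        (fun p => Z p ∩ Uᶜ) hdir' hne'
        (fun p => (hZcomp p).inter_right (isClosed_compl_iff.2 hUopen))
        (fun p => (hZclosed p).inter (isClosed_compl_iff.2 hUopen))
      obtain ⟨z, hz⟩ := this
      have hz1 : z ∈ ⋂ p, Z p := Set.mem_iInter.2 fun p => (Set.mem_iInter.1 hz p).1
      have hz2 : z ∈ Uᶜ := (Set.mem_iInter.1 hz (Classical.arbitrary I)).2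
      exact hz2 (hUsub (hmem ▸ hz1))
    obtain ⟨⟨⟨N, δ⟩, hN, hδ⟩, hpU⟩ := hexists
    refine ⟨min (δ/2) (δ₀/2), lt_min (by linarith) (by linarith), ?_⟩
    intro y hy
    have hyx : dist y x < min (δ/2) (δ₀/2) := Metric.mem_ball.1 hy
    have hsub1 : Metric.ball y (δ/2) ⊆ Metric.ball x δ := by
      apply Metric.ball_subset_ball'
      have : dist y x ≤ δ/2 := le_of_lt (lt_of_lt_of_le hyx (min_le_left _ _))
      linarith
    have hsub2 : Metric.ball y (δ₀/2) ⊆ Metric.ball x δ₀ := by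
      apply Metric.ball_subset_ball'
      have : dist y x ≤ δ₀/2 := le_of_lt (lt_of_lt_of_le hyx (min_le_right _ _))
      linarith
    refine Set.Subset.trans ?_ hpU
    refine Set.subset_inter ?_ (hmPhiK y (δ₀/2) (by linarith) hsub2)
    refine (mPhi_subset_Z Φ y hN (by linarith : (0:ℝ) < δ/2)).trans (clco_mono ?_)
    exact Set.biUnion_subset_biUnion_left (Set.diff_subset_diff_left hsub1)

/-- Proposition: for a cusco map `Φ`, the map `m(Φ)` is cusco and satisfies
`m(Φ)(x̄) ⊆ ⋂_{δ>0} clco Φ(B_δ(x̄)) ⊆ Φ(x̄)` for all `x̄`. -/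
theorem mPhi_cusco_and_subset (d l : ℕ) (Φ : Euc d → Set (Euc l)) (hΦ : IsCusco Φ) :
    IsCusco (mPhi Φ) ∧
    ∀ xbar : Euc d,
      mPhi Φ xbar ⊆ (⋂ (δ : ℝ) (_ : 0 < δ), clco (⋃ a ∈ Metric.ball xbar δ, Φ a)) ∧
      (⋂ (δ : ℝ) (_ : 0 < δ), clco (⋃ a ∈ Metric.ball xbar δ, Φ a)) ⊆ Φ xbar := by
  have hfirst : ∀ xbar : Euc d,
      mPhi Φ xbar ⊆ (⋂ (δ : ℝ) (_ : 0 < δ), clco (⋃ a ∈ Metric.ball xbar δ, Φ a)) := by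
    intro xbar z hz
    simp only [Set.mem_iInter]
    intro δ hδ
    have := mPhi_subset_Z Φ xbar (N := ∅) (by simp) hδ hz
    simpa using this
  constructor
  · constructor
    · exact fun x U hU hsub => (mPhi_key hΦ x).2 U hU hsub
    · intro x
      have hsub : mPhi Φ x ⊆ Φ x := (hfirst x).trans (iInter_clco_subset hΦ x)
      have hclosed : IsClosed (mPhi Φ x) :=
        isClosed_iInter fun N => isClosed_iInter fun _ => isClosed_iInter fun δ =>
          isClosed_iInter fun _ => isClosed_closure
      refine ⟨(mPhi_key hΦ x).1, (hΦ.2 x).2.1.of_isClosed_subset hclosed hsub, ?_⟩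
      exact convex_iInter fun N => convex_iInter fun _ => convex_iInter fun δ =>
        convex_iInter fun _ => (convex_convexHull ℝ _).closure
  · exact fun xbar => ⟨hfirst xbar, iInter_clco_subset hΦ xbar⟩
end
end

section
/- Let Φ : ℝ^d ⇒ ℝ^ℓ be a cusco map. Then m(Φ)(x̄) = Φ(x̄) for Lebesgue-almost all x̄ ∈ ℝ^d. -/
open MeasureTheory Metric Filter Set Topology

noncomputable section

/-- `m(Φ)(x) ⊆ Φ(x)` for every `x`, by upper semicontinuity. -/
lemma mPhi_subset {d l : ℕ} (Φ : Euc d → Set (Euc l)) (hΦ : IsCusco Φ) (x : Euc d) :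
    mPhi Φ x ⊆ Φ x := by
  intro z hz
  by_contra hzΦ
  obtain ⟨hne, hcpt, _⟩ := hΦ.2 x
  have hcl : IsClosed (Φ x) := hcpt.isClosed
  have hpos : 0 < infDist z (Φ x) := (hcl.notMem_iff_infDist_pos hne).1 hzΦ
  set ε := infDist z (Φ x) with hε
  obtain ⟨δ, hδ, hδsub⟩ := hΦ.1 x (thickening (ε/2) (Φ x)) isOpen_thickening
    (self_subset_thickening (by linarith) _)
  have hz' : z ∈ clco (⋃ a ∈ Metric.ball x δ \ (∅ : Set (Euc d)), Φ a) := by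
    have := mem_iInter.1 hz (∅ : Set (Euc d))
    have := mem_iInter.1 this (by simp)
    have := mem_iInter.1 this δ
    exact mem_iInter.1 this hδ
  have hsub : (⋃ a ∈ Metric.ball x δ \ (∅ : Set (Euc d)), Φ a) ⊆ thickening (ε/2) (Φ x) := by
    simp only [diff_empty, iUnion_subset_iff]
    exact fun a ha => hδsub a ha
  have hconv : convexHull ℝ (⋃ a ∈ Metric.ball x δ \ (∅ : Set (Euc d)), Φ a)
      ⊆ thickening (ε/2) (Φ x) :=
    convexHull_min hsub ((hΦ.2 x).2.2.thickening _)
  have : z ∈ thickening ε (Φ x) := by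
    have h1 : clco (⋃ a ∈ Metric.ball x δ \ (∅ : Set (Euc d)), Φ a)
        ⊆ cthickening (ε/2) (Φ x) :=
      (closure_mono hconv).trans (closure_thickening_subset_cthickening _ _)
    exact cthickening_subset_thickening' hpos (by linarith) _ (h1 hz')
  have := (mem_thickening_iff_infDist_lt hne).1 this
  simp only [← hε] at this
  exact lt_irrefl _ this

/-- The set of points of a set `E` having a neighborhood meeting `E` in a null set is null. -/
lemma badSet_null {d : ℕ} (E : Set (Euc d)) :
    volume {x | x ∈ E ∧ ∃ δ > (0:ℝ), volume (E ∩ Metric.ball x δ) = 0} = 0 := by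
  set B := {x | x ∈ E ∧ ∃ δ > (0:ℝ), volume (E ∩ Metric.ball x δ) = 0} with hB
  apply measure_null_of_locally_null
  rintro x ⟨hxE, δ, hδ, hvol⟩
  refine ⟨E ∩ Metric.ball x δ, ?_, hvol⟩
  apply Filter.mem_of_superset (inter_mem_nhdsWithin B (Metric.ball_mem_nhds x hδ))
  rintro y ⟨hyB, hyb⟩
  exact ⟨hyB.1, hyb⟩

/-- The bad set associated to a functional `g` and a level `r`. -/
def cuscoBad {d l : ℕ} (Φ : Euc d → Set (Euc l)) (g : Euc l →L[ℝ] ℝ) (r : ℝ) : Set (Euc d) :=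
  {x | x ∈ {w | ∃ z ∈ Φ w, r < g z} ∧
    ∃ δ > (0:ℝ), volume ({w | ∃ z ∈ Φ w, r < g z} ∩ Metric.ball x δ) = 0}

lemma cuscoBad_null {d l : ℕ} (Φ : Euc d → Set (Euc l)) (g : Euc l →L[ℝ] ℝ) (r : ℝ) :
    volume (cuscoBad Φ g r) = 0 :=
  badSet_null _

/-- Proposition: for a cusco map `Φ`, `m(Φ) = Φ` almost everywhere. -/
theorem mPhi_ae_eq (d l : ℕ) (Φ : Euc d → Set (Euc l)) (hΦ : IsCusco Φ) :
    ∀ᵐ xbar : Euc d, mPhi Φ xbar = Φ xbar := by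
  obtain ⟨G, hGc, hGd⟩ := TopologicalSpace.exists_countable_dense (Euc l →L[ℝ] ℝ)
  have hae : ∀ᵐ x : Euc d, ∀ g ∈ G, ∀ r : ℚ, x ∉ cuscoBad Φ g (r : ℝ) := by
    rw [ae_ball_iff hGc]
    intro g _
    rw [ae_all_iff]
    intro r
    exact measure_eq_zero_iff_ae_notMem.1 (cuscoBad_null Φ g r)
  filter_upwards [hae] with x hx
  refine Subset.antisymm (mPhi_subset Φ hΦ x) ?_
  intro y hy
  simp only [mPhi, mem_iInter]
  intro N hN δ hδ
  by_contra hyc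
  obtain ⟨hne, hcpt, _⟩ := hΦ.2 x
  obtain ⟨δ₀, hδ₀, hδ₀sub⟩ := hΦ.1 x (thickening 1 (Φ x)) isOpen_thickening
    (self_subset_thickening one_pos _)
  set δ' := min δ δ₀ with hδ'def
  have hδ' : 0 < δ' := lt_min hδ hδ₀
  set S := ⋃ a ∈ Metric.ball x δ' \ N, Φ a with hSdef
  have hSsub : S ⊆ thickening 1 (Φ x) := by
    simp only [hSdef, iUnion_subset_iff]
    exact fun a ha => hδ₀sub a (Metric.ball_subset_ball (min_le_right δ δ₀) ha.1)
  have hSb : Bornology.IsBounded S :=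
    Bornology.IsBounded.subset (hcpt.isBounded.thickening) hSsub
  set C : Set (Euc l) := clco S with hCdef
  have hCcl : IsClosed C := isClosed_closure
  have hCconv : Convex ℝ C := (convex_convexHull ℝ S).closure
  have hCb : Bornology.IsBounded C := (isBounded_convexHull.2 hSb).closure
  have hyC : y ∉ C := by
    intro hyC
    apply hyc
    apply closure_mono (convexHull_mono ?_) hyC
    exact biUnion_subset_biUnion_left
      (diff_subset_diff_left (Metric.ball_subset_ball (min_le_left δ δ₀)))
  obtain ⟨R, hR⟩ := (hCb.union (Bornology.isBounded_singleton (x := y))).subset_closedBall 0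
  have hyR : y ∈ closedBall (0 : Euc l) R := hR (mem_union_right _ rfl)
  have hR0 : 0 ≤ R := by
    have := mem_closedBall_zero_iff.1 hyR
    exact le_trans (norm_nonneg y) this
  obtain ⟨f, u, hfu, huy⟩ := geometric_hahn_banach_closed_point hCconv hCcl hyC
  set m := f y - u with hm
  have hmpos : 0 < m := by simp [hm]; linarith
  set ε := m / (4 * (R + 1)) with hε
  have hεpos : 0 < ε := by
    apply div_pos hmpos
    nlinarith
  obtain ⟨g, hgG, hgf⟩ := hGd.exists_dist_lt f hεpos
  have hb : ∀ z : Euc l, z ∈ closedBall (0 : Euc l) R → |g z - f z| ≤ ε * R := by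
    intro z hz
    have h1 : |g z - f z| = ‖(g - f) z‖ := by
      simp [ContinuousLinearMap.sub_apply, Real.norm_eq_abs]
    rw [h1]
    calc ‖(g - f) z‖ ≤ ‖g - f‖ * ‖z‖ := (g - f).le_opNorm z
      _ ≤ ε * R := by
        apply mul_le_mul _ (mem_closedBall_zero_iff.1 hz) (norm_nonneg z) (le_of_lt hεpos)
        rw [← dist_eq_norm, dist_comm]
        exact le_of_lt hgf
  have hεR : ε * R < m / 4 := by
    have h1 : ε * (R + 1) = m / 4 := by
      rw [hε]; field_simp
    nlinarith
  obtain ⟨r, hr1, hr2⟩ := exists_rat_btwn (show u + m/4 < u + m/2 by linarith)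
  have hgy : (r : ℝ) < g y := by
    have h1 := abs_le.1 (hb y hyR)
    have : f y = u + m := by rw [hm]; ring
    linarith [h1.1]
  have hCg : ∀ z ∈ S, g z < (r : ℝ) := by
    intro z hz
    have hzC : z ∈ C := subset_closure (subset_convexHull ℝ S hz)
    have hzR : z ∈ closedBall (0 : Euc l) R := hR (mem_union_left _ hzC)
    have h1 := abs_le.1 (hb z hzR)
    have h2 := hfu z hzC
    linarith [h1.2]
  apply hx g hgG r
  refine ⟨⟨y, hy, hgy⟩, δ', hδ', ?_⟩
  apply measure_mono_null _ hN
  rintro w ⟨⟨z, hzΦ, hzg⟩, hwb⟩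
  by_contra hwN
  exact absurd hzg (not_lt.2 (le_of_lt (hCg z (mem_biUnion ⟨hwb, hwN⟩ hzΦ))))
end
end

section
/- Let Φ₁, Φ₂ : ℝ^d ⇒ ℝ^ℓ be cusco maps. Then Φ₁(x) = Φ₂(x) for Lebesgue-almost all x ∈ ℝ^d if and only if m(Φ₁)(x) = m(Φ₂)(x) for all x ∈ ℝ^d. -/
open MeasureTheory Metric Filter Set Topology

noncomputable section

namespace AeMPhiAux

variable {d l : ℕ}

lemma clco_mono {n : ℕ} {A B : Set (Euc n)} (h : A ⊆ B) : clco A ⊆ clco B :=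
  closure_mono (convexHull_mono h)

/-- The minimal map is contained in `Φ` everywhere. -/
lemma mPhi_subset (Φ : Euc d → Set (Euc l)) (hΦ : IsCusco Φ) (x : Euc d) :
    mPhi Φ x ⊆ Φ x := by
  intro v hv
  by_contra hvx
  obtain ⟨f, u, hfv, hfb⟩ :=
    geometric_hahn_banach_point_closed (hΦ.2 x).2.2 (hΦ.2 x).2.1.isClosed hvx
  obtain ⟨δ, hδ, hU⟩ := hΦ.1 x {w | u < f w}
    (isOpen_lt continuous_const f.continuous) (fun b hb => hfb b hb)
  simp only [mPhi, mem_iInter] at hv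
  have hvK := hv ∅ (by simp) δ hδ
  have hsub : (⋃ a ∈ Metric.ball x δ \ (∅ : Set (Euc d)), Φ a) ⊆ {w | u < f w} := by
    intro w hw
    simp only [mem_iUnion, diff_empty] at hw
    obtain ⟨a, ha, hwa⟩ := hw
    exact hU a ha hwa
  have hcl : clco (⋃ a ∈ Metric.ball x δ \ (∅ : Set (Euc d)), Φ a) ⊆ {w | u ≤ f w} := by
    have h1 : convexHull ℝ (⋃ a ∈ Metric.ball x δ \ (∅ : Set (Euc d)), Φ a) ⊆ {w | u < f w} :=
      convexHull_min hsub (convex_halfSpace_gt ⟨f.map_add, f.map_smul⟩ u)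
    refine (closure_mono h1).trans ?_
    have : closure {w : Euc l | u < f w} ⊆ {w | u ≤ f w} := by
      refine closure_minimal (fun w hw => show u ≤ f w from le_of_lt hw) ?_
      exact isClosed_le continuous_const f.continuous
    exact this
  have := hcl hvK
  simp only [mem_setOf_eq] at this
  linarith

/-- Almost every point of a measurable set is such that the set has positive measure
in every ball around the point. -/
lemma ae_density (T : Set (Euc d)) (hT : MeasurableSet T) :
    ∀ᵐ x : Euc d, x ∈ T → ∀ δ > (0 : ℝ), 0 < volume (T ∩ Metric.ball x δ) := by
  filter_upwards [Besicovitch.ae_tendsto_measure_inter_div_of_measurableSet volume hT]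
    with x hx hxT δ hδ
  simp only [Set.indicator_of_mem hxT, Pi.one_apply] at hx
  have h1 : ∀ᶠ r in 𝓝[>] (0:ℝ),
      (1:ENNReal)/2 < volume (T ∩ closedBall x r) / volume (closedBall x r) := by
    refine hx.eventually (lt_mem_nhds ?_)
    exact ENNReal.half_lt_self one_ne_zero ENNReal.one_ne_top
  have h2 : ∀ᶠ r in 𝓝[>] (0:ℝ), r < δ :=
    eventually_nhdsWithin_of_eventually_nhds (Filter.Tendsto.eventually_lt_const hδ tendsto_id)
  obtain ⟨r, hr1, hr2⟩ := (h1.and h2).exists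
  have hnum : volume (T ∩ closedBall x r) ≠ 0 := by
    intro h0
    rw [h0, ENNReal.zero_div] at hr1
    exact absurd hr1 (by simp)
  calc (0:ENNReal) < volume (T ∩ closedBall x r) := pos_iff_ne_zero.mpr hnum
    _ ≤ volume (T ∩ Metric.ball x δ) :=
      measure_mono (inter_subset_inter_right _ (closedBall_subset_ball hr2))

/-- `Φ x ⊆ mPhi Φ x` for almost every `x`. -/
lemma ae_subset_mPhi (Φ : Euc d → Set (Euc l)) (hΦ : IsCusco Φ) :
    ∀ᵐ x : Euc d, Φ x ⊆ mPhi Φ x := by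
  obtain ⟨D, hDc, hDd⟩ := TopologicalSpace.exists_countable_dense (Euc l)
  set T : Euc l → ℝ → Set (Euc d) :=
    fun q r => {x | (Φ x ∩ Metric.closedBall q r).Nonempty} with hTdef
  have hTclosed : ∀ q r, IsClosed (T q r) := by
    intro q r
    rw [← isOpen_compl_iff, Metric.isOpen_iff]
    intro x hx
    have hsub : Φ x ⊆ (Metric.closedBall q r)ᶜ := by
      intro w hw
      intro hwc
      exact hx ⟨w, hw, hwc⟩
    obtain ⟨δ, hδ, h⟩ := hΦ.1 x _ (Metric.isClosed_closedBall (x := q) (ε := r)).isOpen_compl hsub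
    refine ⟨δ, hδ, fun y hy => ?_⟩
    rintro ⟨w, hw1, hw2⟩
    exact h y hy hw1 hw2
  have key : ∀ᵐ x : Euc d, ∀ q ∈ D, ∀ n : ℕ, x ∈ T q (1/(n+1)) →
      ∀ δ > (0:ℝ), 0 < volume (T q (1/(n+1)) ∩ Metric.ball x δ) := by
    rw [ae_ball_iff hDc]
    intro q hq
    rw [ae_all_iff]
    intro n
    exact ae_density _ (hTclosed q _).measurableSet
  filter_upwards [key] with x hx v hv
  simp only [mPhi, mem_iInter]
  intro N hN δ hδ
  rw [clco, Metric.mem_closure_iff]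
  intro ε hε
  obtain ⟨n, hn⟩ : ∃ n : ℕ, 1/((n:ℝ)+1) < ε/3 :=
    exists_nat_one_div_lt (by linarith)
  set r : ℝ := 1/((n:ℝ)+1) with hrdef
  have hrpos : 0 < r := by positivity
  obtain ⟨q, hqD, hqv⟩ := hDd.exists_dist_lt v hrpos
  have hxT : x ∈ T q r := ⟨v, hv, by
    rw [Metric.mem_closedBall]
    calc dist v q = dist q v := dist_comm _ _
      _ ≤ r := le_of_lt (by rwa [dist_comm] at hqv)⟩
  have hpos := hx q hqD n hxT δ hδ
  have hne : ((T q r ∩ Metric.ball x δ) \ N).Nonempty := by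
    rw [nonempty_iff_ne_empty]
    intro h
    have hsub : T q r ∩ Metric.ball x δ ⊆ N := diff_eq_empty.mp h
    have := measure_mono (μ := volume) hsub
    rw [hN] at this
    exact absurd (le_antisymm this zero_le) (ne_of_gt hpos)
  obtain ⟨a, ⟨haT, haB⟩, haN⟩ := hne
  obtain ⟨w, hwΦ, hwq⟩ := haT
  refine ⟨w, subset_convexHull ℝ _ ?_, ?_⟩
  · simp only [mem_iUnion]
    exact ⟨a, ⟨haB, haN⟩, hwΦ⟩
  · have h1 : dist v q < r := hqv
    have h2 : dist w q ≤ r := hwq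
    calc dist v w ≤ dist v q + dist q w := dist_triangle _ _ _
      _ = dist v q + dist w q := by rw [dist_comm q w]
      _ < r + r := by linarith
      _ < ε := by rw [hrdef]; linarith

/-- The easy direction: a.e. equality gives inclusion of minimal maps. -/
lemma mPhi_mono_ae {Φ₁ Φ₂ : Euc d → Set (Euc l)} (h : ∀ᵐ x : Euc d, Φ₁ x = Φ₂ x)
    (x : Euc d) : mPhi Φ₁ x ⊆ mPhi Φ₂ x := by
  intro v hv
  simp only [mPhi, mem_iInter] at hv ⊢
  intro N hN δ hδ
  have hN₀ : volume {y : Euc d | ¬ Φ₁ y = Φ₂ y} = 0 := ae_iff.mp h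
  have hv' := hv (N ∪ {y | ¬ Φ₁ y = Φ₂ y}) (measure_union_null hN hN₀) δ hδ
  refine clco_mono ?_ hv'
  intro w hw
  simp only [mem_iUnion] at hw ⊢
  obtain ⟨a, ⟨haB, haN⟩, hwa⟩ := hw
  rw [mem_union, not_or] at haN
  have heq : Φ₁ a = Φ₂ a := by
    by_contra hne
    exact haN.2 hne
  exact ⟨a, ⟨haB, haN.1⟩, heq ▸ hwa⟩

end AeMPhiAux

/-- Lemma on equivalent cusco maps: two cusco maps agree almost everywhere
if and only if their minimal maps `m(Φ₁)` and `m(Φ₂)` agree everywhere. -/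
theorem ae_eq_iff_mPhi_eq (d l : ℕ) (Φ₁ Φ₂ : Euc d → Set (Euc l))
    (h₁ : IsCusco Φ₁) (h₂ : IsCusco Φ₂) :
    (∀ᵐ x : Euc d, Φ₁ x = Φ₂ x) ↔ ∀ x : Euc d, mPhi Φ₁ x = mPhi Φ₂ x := by
  constructor
  · intro h x
    exact Subset.antisymm (AeMPhiAux.mPhi_mono_ae h x)
      (AeMPhiAux.mPhi_mono_ae (h.mono fun x hx => hx.symm) x)
  · intro h
    filter_upwards [AeMPhiAux.ae_subset_mPhi Φ₁ h₁, AeMPhiAux.ae_subset_mPhi Φ₂ h₂]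
      with x hx1 hx2
    refine Subset.antisymm ?_ ?_
    · refine hx1.trans ?_
      rw [h x]
      exact AeMPhiAux.mPhi_subset Φ₂ h₂ x
    · refine hx2.trans ?_
      rw [← h x]
      exact AeMPhiAux.mPhi_subset Φ₁ h₁ x
end
end
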